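/- Suppose functions ỹ_a : (0,∞) → ℝ for a = 0,…,A are differentiable, satisfy ỹ_0(x) = x, and satisfy the recurrence x · ỹ_a'(x) − ỹ_a(x) = a · ỹ_{a−1}(x) for all a = 1,…,A and x > 0. Then there exist constants C_1,…,C_A such that ỹ_a(x) = y_a(x) + Σ_{b=0}^{a−1} C_{a−b} (a!/b!) y_b(x) for all a and all x > 0, where y_b(x) = x (log x)^b. -/

import Mathlib

open Real

noncomputable def kinY (a : ℕ) (x : ℝ) : ℝ := x * (Real.log x) ^ a

lemma kinY_hasDerivAt (b : ℕ) (x : ℝ) (hx : 0 < x) :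
    HasDerivAt (kinY b) ((Real.log x) ^ b + b * (Real.log x) ^ (b - 1)) x := by
  have h1 : HasDerivAt (fun y : ℝ => y * (Real.log y) ^ b)
      (1 * (Real.log x) ^ b + x * (b * (Real.log x) ^ (b - 1) * x⁻¹)) x :=
    (hasDerivAt_id x).mul ((Real.hasDerivAt_log hx.ne').pow b)
  convert h1 using 1
  · rfl
  · field_simp

lemma hom_sol (f : ℝ → ℝ) (hd : ∀ x : ℝ, 0 < x → DifferentiableAt ℝ f x)
    (hode : ∀ x : ℝ, 0 < x → x * deriv f x - f x = 0) :
    ∀ x : ℝ, 0 < x → f x = f 1 * x := by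
  have hg : ∀ x : ℝ, 0 < x → HasDerivAt (fun y => f y / y) 0 x := by
    intro x hx
    have h1 : HasDerivAt (fun y => f y / y)
        ((deriv f x * x - f x * 1) / x ^ 2) x :=
      ((hd x hx).hasDerivAt).div (hasDerivAt_id x) hx.ne'
    convert h1 using 1
    have := hode x hx
    field_simp
    nlinarith [hode x hx]
  have hconst : ∀ x : ℝ, 0 < x → f x / x = f 1 / 1 := by
    intro x hx
    have hconv : Convex ℝ (Set.Ioi (0:ℝ)) := convex_Ioi 0
    have hdiff : DifferentiableOn ℝ (fun y => f y / y) (Set.Ioi (0:ℝ)) :=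
      fun y hy => ((hg y hy).differentiableAt).differentiableWithinAt
    refine hconv.is_const_of_fderivWithin_eq_zero hdiff ?_ hx (by norm_num)
    intro z hz
    have : fderivWithin ℝ (fun y => f y / y) (Set.Ioi (0:ℝ)) z
        = fderiv ℝ (fun y => f y / y) z :=
      fderivWithin_of_isOpen isOpen_Ioi hz
    rw [this, (hg z hz).hasFDerivAt.fderiv]
    ext
    simp
  intro x hx
  have := hconst x hx
  field_simp at this
  linarith [this]

theorem stmt_2 (A : ℕ) (ytil : ℕ → ℝ → ℝ)
    (hdiff : ∀ a ≤ A, ∀ x : ℝ, 0 < x → DifferentiableAt ℝ (ytil a) x)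
    (h0 : ∀ x : ℝ, 0 < x → ytil 0 x = x)
    (hrec : ∀ a, 1 ≤ a → a ≤ A → ∀ x : ℝ, 0 < x →
      x * deriv (ytil a) x - ytil a x = a * ytil (a - 1) x) :
    ∃ C : ℕ → ℝ, ∀ a ≤ A, ∀ x : ℝ, 0 < x →
      ytil a x = kinY a x +
        ∑ b ∈ Finset.range a, C (a - b) * ((a.factorial : ℝ) / (b.factorial : ℝ)) * kinY b x := by
  classical
  set C : ℕ → ℝ := fun a => ytil a 1 / (a.factorial : ℝ) with hC
  set g : ℕ → ℝ → ℝ := fun a x => kinY a x +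
      ∑ b ∈ Finset.range a, C (a - b) * ((a.factorial : ℝ) / (b.factorial : ℝ)) * kinY b x
    with hgdef
  set D : ℕ → ℝ → ℝ := fun a x => ((Real.log x) ^ a + a * (Real.log x) ^ (a - 1)) +
      ∑ b ∈ Finset.range a, C (a - b) * ((a.factorial : ℝ) / (b.factorial : ℝ)) *
        ((Real.log x) ^ b + b * (Real.log x) ^ (b - 1))
    with hDdef
  have hgderiv : ∀ a (x : ℝ), 0 < x → HasDerivAt (g a) (D a x) x := by
    intro a x hx
    exact (kinY_hasDerivAt a x hx).add
      (HasDerivAt.fun_sum fun b _ => (kinY_hasDerivAt b x hx).const_mul _)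
  -- key ODE identity for g
  have hkey : ∀ a (x : ℝ), 0 < x → x * D (a + 1) x - g (a + 1) x = (a + 1) * g a x := by
    intro a x hx
    simp only [hDdef, hgdef, kinY]
    have hsum : ∑ b ∈ Finset.range (a + 1),
        (x * (C (a + 1 - b) * (((a+1).factorial : ℝ) / (b.factorial : ℝ)) *
          ((Real.log x) ^ b + b * (Real.log x) ^ (b - 1)))
        - C (a + 1 - b) * (((a+1).factorial : ℝ) / (b.factorial : ℝ)) * (x * (Real.log x) ^ b))
        = (a + 1 : ℝ) * ∑ b ∈ Finset.range a,
          C (a - b) * ((a.factorial : ℝ) / (b.factorial : ℝ)) * (x * (Real.log x) ^ b) := by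
      rw [Finset.sum_range_succ', Finset.mul_sum]
      have h0' : x * (C (a + 1 - 0) * (((a+1).factorial : ℝ) / ((0:ℕ).factorial : ℝ)) *
          ((Real.log x) ^ 0 + (0:ℕ) * (Real.log x) ^ (0 - 1)))
          - C (a + 1 - 0) * (((a+1).factorial : ℝ) / ((0:ℕ).factorial : ℝ)) * (x * (Real.log x) ^ 0) = 0 := by
        norm_num
        ring
      rw [h0', add_zero]
      refine Finset.sum_congr rfl ?_
      intro b _
      have h1 : a + 1 - (b + 1) = a - b := by omega
      have h2 : (((a+1).factorial : ℝ) / (((b+1)).factorial : ℝ)) * ((b:ℝ)+1)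
          = ((a:ℝ) + 1) * ((a.factorial : ℝ) / (b.factorial : ℝ)) := by
        rw [Nat.factorial_succ a, Nat.factorial_succ b]
        have hb : ((b.factorial : ℝ)) ≠ 0 := Nat.cast_ne_zero.2 b.factorial_ne_zero
        push_cast
        field_simp
      rw [h1]
      push_cast
      linear_combination (C (a - b) * x * Real.log x ^ b) * h2
    have e1 : x * (∑ b ∈ Finset.range (a + 1),
          C (a + 1 - b) * (((a+1).factorial : ℝ) / (b.factorial : ℝ)) *
            ((Real.log x) ^ b + b * (Real.log x) ^ (b - 1)))
        - ∑ b ∈ Finset.range (a + 1),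
          C (a + 1 - b) * (((a+1).factorial : ℝ) / (b.factorial : ℝ)) * (x * (Real.log x) ^ b)
        = ∑ b ∈ Finset.range (a + 1),
        (x * (C (a + 1 - b) * (((a+1).factorial : ℝ) / (b.factorial : ℝ)) *
          ((Real.log x) ^ b + b * (Real.log x) ^ (b - 1)))
        - C (a + 1 - b) * (((a+1).factorial : ℝ) / (b.factorial : ℝ)) * (x * (Real.log x) ^ b)) := by
      rw [Finset.mul_sum, Finset.sum_sub_distrib]
    simp only [Nat.add_sub_cancel]
    push_cast
    linear_combination e1 + hsum
  have hmain : ∀ a, a ≤ A → ∀ x : ℝ, 0 < x → ytil a x = g a x := by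
    intro a
    induction a with
    | zero =>
      intro _ x hx
      simp only [hgdef, kinY, Finset.range_zero, Finset.sum_empty, pow_zero, mul_one, add_zero]
      exact h0 x hx
    | succ a ih =>
      intro hA x hx
      have ihA := ih (by omega)
      set f : ℝ → ℝ := fun y => ytil (a+1) y - g (a+1) y with hf
      have hfd : ∀ y : ℝ, 0 < y → DifferentiableAt ℝ f y := fun y hy =>
        (hdiff (a+1) hA y hy).sub (hgderiv (a+1) y hy).differentiableAt
      have hode : ∀ y : ℝ, 0 < y → y * deriv f y - f y = 0 := by
        intro y hy
        have hdf : deriv f y = deriv (ytil (a+1)) y - D (a+1) y := by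
          rw [hf, deriv_fun_sub (hdiff (a+1) hA y hy) (hgderiv (a+1) y hy).differentiableAt,
            (hgderiv (a+1) y hy).deriv]
        have h1 := hrec (a+1) (by omega) hA y hy
        simp only [Nat.add_sub_cancel] at h1
        have h2 := hkey a y hy
        have h3 := ihA y hy
        rw [hdf, hf]
        push_cast at h1 ⊢
        linear_combination h1 - h2 + ((a:ℝ)+1) * h3
      have hx0 := hom_sol f hfd hode x hx
      have hf1 : f 1 = 0 := by
        rw [hf]
        simp only [hgdef, kinY, Real.log_one]
        rw [Finset.sum_range_succ']
        simp only [hC, Nat.add_sub_cancel, Nat.sub_zero, Nat.factorial_zero, Nat.cast_one,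
          div_one, pow_zero, mul_one, one_mul, pow_succ, mul_zero, zero_pow, Finset.sum_const_zero]
        field_simp
        ring
      have hz : f x = 0 := by rw [hx0, hf1, zero_mul]
      have hz2 : ytil (a+1) x - g (a+1) x = 0 := hz
      linarith
  exact ⟨C, fun a ha x hx => hmain a ha x hx⟩
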